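/- For every n ≥ 0 and every set E ⊂ ℝ^d, one has ν̃_n^s(E) ≤ ν_n^s(E) ≤ (2+√d)^s · ν̃_n^s(E), where ν̃_n^s uses covers by balls with centers in S_n and radii ≥ 1, and ν_n^s uses covers by balls centered at integer points of S_n with positive integer radii. -/

import Mathlib

open Metric Set ENNReal MeasureTheory

noncomputable def shell (X : Type*) [NormedAddCommGroup X] (n : ℕ) : Set X :=
  if n = 0 then Metric.ball 0 1 else Metric.ball 0 ((2:ℝ)^n) \ Metric.ball 0 ((2:ℝ)^(n-1))

noncomputable def nuT {X : Type*} [NormedAddCommGroup X] (s : ℝ) (n : ℕ) (E : Set X) : ℝ≥0∞ :=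
  sInf { t : ℝ≥0∞ | ∃ (m : ℕ) (x : Fin m → X) (r : Fin m → ℝ),
    (∀ i, x i ∈ shell X n) ∧ (∀ i, 1 ≤ r i) ∧
    (E ∩ shell X n ⊆ ⋃ i, Metric.ball (x i) (r i)) ∧
    t = ∑ i, ENNReal.ofReal ((r i / 2^n)^s) }

noncomputable def macroDim {X : Type*} [NormedAddCommGroup X] (E : Set X) : ℝ :=
  sInf { s : ℝ | 0 ≤ s ∧ ∑' n, nuT s n E < ⊤ }

def IsIntegerPoint {d : ℕ} (x : EuclideanSpace ℝ (Fin d)) : Prop := ∀ j, ∃ z : ℤ, x j = (z : ℝ)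

def IsProperCover {d : ℕ} (n : ℕ) (E : Set (EuclideanSpace ℝ (Fin d))) {m : ℕ}
    (x : Fin m → EuclideanSpace ℝ (Fin d)) (r : Fin m → ℕ) : Prop :=
  (∀ i, x i ∈ shell (EuclideanSpace ℝ (Fin d)) n) ∧ (∀ i, IsIntegerPoint (x i)) ∧
  (∀ i, 1 ≤ r i) ∧ (E ∩ shell (EuclideanSpace ℝ (Fin d)) n ⊆ ⋃ i, Metric.ball (x i) ((r i : ℝ)))

noncomputable def nuP {d : ℕ} (s : ℝ) (n : ℕ) (E : Set (EuclideanSpace ℝ (Fin d))) : ℝ≥0∞ :=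
  sInf { t : ℝ≥0∞ | ∃ (m : ℕ) (x : Fin m → EuclideanSpace ℝ (Fin d)) (r : Fin m → ℕ),
    IsProperCover n E x r ∧ t = ∑ i, ENNReal.ofReal (((r i : ℝ) / 2^n)^s) }


noncomputable def trc (t : ℝ) : ℤ := if 0 ≤ t then ⌊t⌋ else ⌈t⌉
noncomputable def awy (t : ℝ) : ℤ := if 0 ≤ t then ⌈t⌉ else ⌊t⌋

lemma abs_trc_le (t : ℝ) : |(trc t : ℝ)| ≤ |t| := by
  unfold trc
  rcases le_or_gt 0 t with h | h
  · rw [if_pos h, abs_of_nonneg h, abs_of_nonneg (by exact_mod_cast Int.floor_nonneg.mpr h)]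
    exact Int.floor_le t
  · rw [if_neg (not_le.mpr h), abs_of_nonpos h.le,
      abs_of_nonpos (by exact_mod_cast Int.ceil_le.mpr (by exact_mod_cast h.le : t ≤ ((0:ℤ):ℝ)))]
    simpa using Int.le_ceil t

lemma abs_le_awy (t : ℝ) : |t| ≤ |(awy t : ℝ)| := by
  unfold awy
  rcases le_or_gt 0 t with h | h
  · rw [if_pos h, abs_of_nonneg h, abs_of_nonneg (le_trans h (Int.le_ceil t))]
    exact Int.le_ceil t
  · rw [if_neg (not_le.mpr h), abs_of_nonpos h.le,
      abs_of_nonpos (le_trans (Int.floor_le t) h.le)]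
    simpa using Int.floor_le t

lemma abs_trc_sub_le (t : ℝ) : |(trc t : ℝ) - t| ≤ 1 := by
  unfold trc
  rcases le_or_gt 0 t with h | h
  · rw [if_pos h, abs_sub_comm, abs_of_nonneg (by linarith [Int.floor_le t])]
    linarith [Int.sub_one_lt_floor t]
  · rw [if_neg (not_le.mpr h), abs_of_nonneg (by linarith [Int.le_ceil t])]
    linarith [Int.ceil_lt_add_one t]

lemma abs_awy_sub_le (t : ℝ) : |(awy t : ℝ) - t| ≤ 1 := by
  unfold awy
  rcases le_or_gt 0 t with h | h
  · rw [if_pos h, abs_of_nonneg (by linarith [Int.le_ceil t])]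
    linarith [Int.ceil_lt_add_one t]
  · rw [if_neg (not_le.mpr h), abs_sub_comm, abs_of_nonneg (by linarith [Int.floor_le t])]
    linarith [Int.sub_one_lt_floor t]

lemma abs_awy_sub_trc_le (t : ℝ) : |(awy t : ℝ) - (trc t : ℝ)| ≤ 1 := by
  have h1 : ((⌈t⌉ : ℝ)) ≤ (⌊t⌋ : ℝ) + 1 := by exact_mod_cast Int.ceil_le_floor_add_one t
  have h2 : ((⌊t⌋ : ℝ)) ≤ (⌈t⌉ : ℝ) := by exact_mod_cast Int.floor_le_ceil t
  unfold awy trc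
  rcases le_or_gt 0 t with h | h
  · rw [if_pos h, if_pos h, abs_le]; constructor <;> linarith
  · rw [if_neg (not_le.mpr h), if_neg (not_le.mpr h), abs_le]; constructor <;> linarith

lemma exists_near_integer {d : ℕ} (n : ℕ) (x : EuclideanSpace ℝ (Fin d))
    (hx : x ∈ shell (EuclideanSpace ℝ (Fin d)) n) :
    ∃ y : EuclideanSpace ℝ (Fin d), y ∈ shell (EuclideanSpace ℝ (Fin d)) n ∧
      IsIntegerPoint y ∧ dist x y ≤ Real.sqrt d := by
  classical
  set v : ℕ → EuclideanSpace ℝ (Fin d) := fun k =>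
    WithLp.toLp 2 (fun j : Fin d => if (j : ℕ) < k then ((awy (x j) : ℝ)) else ((trc (x j) : ℝ))) with hv
  have happ : ∀ k (j : Fin d), v k j = if (j : ℕ) < k then ((awy (x j) : ℝ)) else ((trc (x j) : ℝ)) :=
    fun k j => rfl
  have hint : ∀ k, IsIntegerPoint (v k) := by
    intro k j
    rw [happ]
    split
    · exact ⟨_, rfl⟩
    · exact ⟨_, rfl⟩
  have hdist : ∀ k, dist x (v k) ≤ Real.sqrt d := by
    intro k
    rw [EuclideanSpace.dist_eq]
    apply Real.sqrt_le_sqrt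
    calc ∑ j, dist (x j) (v k j) ^ 2 ≤ ∑ _j : Fin d, (1:ℝ) := by
          apply Finset.sum_le_sum
          intro j _
          have h1 : dist (x j) (v k j) ≤ 1 := by
            rw [Real.dist_eq, happ, abs_sub_comm]
            split
            · exact abs_awy_sub_le _
            · exact abs_trc_sub_le _
          nlinarith [dist_nonneg (x := x j) (y := v k j)]
      _ = (d : ℝ) := by simp
  have hnorm0 : ‖v 0‖ ≤ ‖x‖ := by
    rw [EuclideanSpace.norm_eq, EuclideanSpace.norm_eq]
    apply Real.sqrt_le_sqrt
    apply Finset.sum_le_sum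
    intro j _
    rw [Real.norm_eq_abs, Real.norm_eq_abs, sq_abs, sq_abs, ← sq_abs (v 0 j), ← sq_abs (x j)]
    have : v 0 j = (trc (x j) : ℝ) := by rw [happ]; simp
    rw [this]
    exact pow_le_pow_left₀ (abs_nonneg _) (abs_trc_le _) 2
  have hnormd : ‖x‖ ≤ ‖v d‖ := by
    rw [EuclideanSpace.norm_eq, EuclideanSpace.norm_eq]
    apply Real.sqrt_le_sqrt
    apply Finset.sum_le_sum
    intro j _
    rw [Real.norm_eq_abs, Real.norm_eq_abs, sq_abs, sq_abs, ← sq_abs (v d j), ← sq_abs (x j)]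
    have : v (d : ℕ) j = (awy (x j) : ℝ) := by rw [happ]; simp [j.isLt]
    rw [this]
    exact pow_le_pow_left₀ (abs_nonneg _) (abs_le_awy _) 2
  have hstep : ∀ k, ‖v (k + 1)‖ ≤ ‖v k‖ + 1 := by
    intro k
    have hsub : ‖v (k + 1) - v k‖ ≤ 1 := by
      rw [EuclideanSpace.norm_eq]
      have hb : ∀ j : Fin d, ‖(v (k + 1) - v k) j‖ ^ 2 ≤ if (j : ℕ) = k then (1:ℝ) else 0 := by
        intro j
        have hj : (v (k + 1) - v k) j = v (k + 1) j - v k j := rfl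
        rw [hj, happ, happ, Real.norm_eq_abs]
        rcases lt_trichotomy (j : ℕ) k with h | h | h
        · rw [if_pos (Nat.lt_succ_of_lt h), if_pos h, if_neg (by omega)]
          simp
        · rw [if_pos (by omega), if_neg (by omega), if_pos h]
          have := abs_awy_sub_trc_le (x j)
          nlinarith [abs_nonneg ((awy (x j) : ℝ) - (trc (x j) : ℝ))]
        · rw [if_neg (by omega), if_neg (by omega), if_neg (by omega)]
          simp
      calc Real.sqrt (∑ j, ‖(v (k + 1) - v k) j‖ ^ 2)
          ≤ Real.sqrt (∑ j : Fin d, if (j : ℕ) = k then (1:ℝ) else 0) :=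
            Real.sqrt_le_sqrt (Finset.sum_le_sum fun j _ => hb j)
        _ ≤ 1 := by
            have hs1 : (∑ j : Fin d, if (j : ℕ) = k then (1:ℝ) else 0) ≤ 1 := ?_
            · calc Real.sqrt (∑ j : Fin d, if (j : ℕ) = k then (1:ℝ) else 0)
                  ≤ Real.sqrt 1 := Real.sqrt_le_sqrt hs1
                _ = 1 := Real.sqrt_one
            by_cases hk : k < d
            · have he : ∀ j : Fin d, ((j : ℕ) = k) = (j = ⟨k, hk⟩) := by
                intro j
                apply propext
                constructor
                · intro h; exact Fin.ext h
                · intro h; subst h; rfl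
              simp_rw [he]
              rw [Finset.sum_ite_eq' Finset.univ (⟨k, hk⟩ : Fin d) (fun _ => (1:ℝ))]
              simp
            · have : ∀ j : Fin d, ¬((j : ℕ) = k) := fun j h => hk (h ▸ j.isLt)
              simp [this]
    have hvv : v k + (v (k + 1) - v k) = v (k + 1) := by abel
    calc ‖v (k + 1)‖ = ‖v k + (v (k + 1) - v k)‖ := by rw [hvv]
      _ ≤ ‖v k‖ + ‖v (k + 1) - v k‖ := norm_add_le _ _
      _ ≤ ‖v k‖ + 1 := by linarith
  by_cases hn : n = 0
  · refine ⟨v 0, ?_, hint 0, hdist 0⟩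
    simp only [shell, if_pos hn, mem_ball_zero_iff] at hx ⊢
    exact lt_of_le_of_lt hnorm0 hx
  · simp only [shell, if_neg hn, mem_diff, mem_ball_zero_iff] at hx
    obtain ⟨hx2, hx1⟩ := hx
    have hx1' : (2:ℝ) ^ (n - 1) ≤ ‖x‖ := not_lt.mp hx1
    have hP : ∃ k, (2:ℝ) ^ (n - 1) ≤ ‖v k‖ := ⟨d, le_trans hx1' hnormd⟩
    have hk : (2:ℝ) ^ (n - 1) ≤ ‖v (Nat.find hP)‖ := Nat.find_spec hP
    have hup : ‖v (Nat.find hP)‖ < 2 ^ n := by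
      rcases Nat.eq_zero_or_pos (Nat.find hP) with h0 | h0
      · rw [h0]; exact lt_of_le_of_lt hnorm0 hx2
      · obtain ⟨m, hm⟩ : ∃ m, Nat.find hP = m + 1 :=
          ⟨Nat.find hP - 1, (Nat.succ_pred_eq_of_pos h0).symm⟩
        have hmlt : ‖v m‖ < 2 ^ (n - 1) := not_le.mp (Nat.find_min hP (by omega))
        have h1 : (1:ℝ) ≤ 2 ^ (n - 1) := one_le_pow₀ (by norm_num)
        have heq : (2:ℝ) ^ n = 2 ^ (n - 1) * 2 := by
          rw [← pow_succ]
          congr 1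
          omega
        rw [hm]
        calc ‖v (m + 1)‖ ≤ ‖v m‖ + 1 := hstep m
          _ < 2 ^ (n - 1) + 1 := by linarith
          _ ≤ 2 ^ n := by rw [heq]; linarith
    refine ⟨v (Nat.find hP), ?_, hint _, hdist _⟩
    simp only [shell, if_neg hn, mem_diff, mem_ball_zero_iff]
    exact ⟨hup, not_lt.mpr hk⟩

/-- For every `n` and every `E ⊆ ℝ^d`, `ν̃ₙˢ(E) ≤ νₙˢ(E) ≤ (2+√d)^s ν̃ₙˢ(E)`. -/
theorem stmt4 (d : ℕ) (s : ℝ) (hs : 0 ≤ s) (n : ℕ) (E : Set (EuclideanSpace ℝ (Fin d))) :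
    nuT s n E ≤ nuP s n E ∧
      nuP s n E ≤ ENNReal.ofReal ((2 + Real.sqrt d) ^ s) * nuT s n E := by
  classical
  have hsd : (0:ℝ) ≤ Real.sqrt d := Real.sqrt_nonneg d
  constructor
  · apply sInf_le_sInf
    rintro t ⟨m, x, r, ⟨hsh, _, hr, hcov⟩, rfl⟩
    exact ⟨m, x, fun i => (r i : ℝ), hsh, fun i => (by exact_mod_cast hr i : (1:ℝ) ≤ (r i : ℝ)), hcov, rfl⟩
  · set c := ENNReal.ofReal ((2 + Real.sqrt d) ^ s) with hcdef
    have hc0 : c ≠ 0 := by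
      rw [hcdef, Ne, ENNReal.ofReal_eq_zero, not_le]
      exact Real.rpow_pos_of_pos (by linarith) s
    have hcT : c ≠ ⊤ := ENNReal.ofReal_ne_top
    set S := { t : ℝ≥0∞ | ∃ (m : ℕ) (x : Fin m → EuclideanSpace ℝ (Fin d)) (r : Fin m → ℝ),
      (∀ i, x i ∈ shell (EuclideanSpace ℝ (Fin d)) n) ∧ (∀ i, 1 ≤ r i) ∧
      (E ∩ shell (EuclideanSpace ℝ (Fin d)) n ⊆ ⋃ i, Metric.ball (x i) (r i)) ∧
      t = ∑ i, ENNReal.ofReal ((r i / 2^n)^s) } with hSdef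
    have hnuT : nuT s n E = sInf S := rfl
    have hkey : ∀ t ∈ S, nuP s n E ≤ c * t := by
      rintro t ⟨m, x, r, hsh, hr, hcov, rfl⟩
      choose y hy hyint hyd using fun i => exists_near_integer n (x i) (hsh i)
      set R : Fin m → ℕ := fun i => ⌈r i + Real.sqrt d⌉₊ with hRdef
      have hRle : ∀ i, (R i : ℝ) ≤ (2 + Real.sqrt d) * r i := by
        intro i
        have h1 : (R i : ℝ) < r i + Real.sqrt d + 1 :=
          Nat.ceil_lt_add_one (by linarith [hr i])
        nlinarith [hr i]
      have hcover : IsProperCover n E y R := by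
        refine ⟨hy, hyint, fun i => Nat.one_le_ceil_iff.mpr (by linarith [hr i]), ?_⟩
        intro z hz
        obtain ⟨_, ⟨i, rfl⟩, hzi⟩ := hcov hz
        refine mem_iUnion.mpr ⟨i, mem_ball.mpr ?_⟩
        have hle := Nat.le_ceil (r i + Real.sqrt d)
        have h1 : dist z (x i) < r i := mem_ball.mp hzi
        calc dist z (y i) ≤ dist z (x i) + dist (x i) (y i) := dist_triangle _ _ _
          _ < r i + Real.sqrt d := by linarith [hyd i]
          _ ≤ R i := hle
      have h2n : (0:ℝ) < 2 ^ n := by positivity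
      calc nuP s n E ≤ ∑ i, ENNReal.ofReal (((R i : ℝ) / 2^n)^s) :=
            sInf_le ⟨m, y, R, hcover, rfl⟩
        _ ≤ ∑ i, c * ENNReal.ofReal ((r i / 2^n)^s) := by
            apply Finset.sum_le_sum
            intro i _
            have hri : (0:ℝ) ≤ r i := by linarith [hr i]
            have hq : ((R i : ℝ) / 2^n) ≤ (2 + Real.sqrt d) * (r i / 2^n) := by
              rw [← mul_div_assoc]
              exact (div_le_div_iff_of_pos_right h2n).mpr (hRle i)
            have h1 : ((R i : ℝ) / 2^n)^s ≤ ((2 + Real.sqrt d) * (r i / 2^n))^s :=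
              Real.rpow_le_rpow (by positivity) hq hs
            have h2 : ((2 + Real.sqrt d) * (r i / 2^n))^s
                = (2 + Real.sqrt d)^s * (r i / 2^n)^s :=
              Real.mul_rpow (by linarith) (by positivity)
            calc ENNReal.ofReal (((R i : ℝ) / 2^n)^s)
                ≤ ENNReal.ofReal ((2 + Real.sqrt d)^s * (r i / 2^n)^s) := by
                  apply ENNReal.ofReal_le_ofReal
                  rw [← h2]; exact h1
              _ = c * ENNReal.ofReal ((r i / 2^n)^s) := by
                  rw [hcdef, ENNReal.ofReal_mul (Real.rpow_nonneg (by linarith) s)]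
        _ = c * ∑ i, ENNReal.ofReal ((r i / 2^n)^s) := (Finset.mul_sum _ _ _).symm
    rw [hnuT]
    rcases Set.eq_empty_or_nonempty S with hS | hS
    · rw [hS, sInf_empty, ENNReal.mul_top hc0]
      exact le_top
    · haveI : Nonempty S := hS.to_subtype
      calc nuP s n E ≤ ⨅ t : S, c * (t : ℝ≥0∞) := le_iInf fun t => hkey t t.2
        _ = c * ⨅ t : S, (t : ℝ≥0∞) := (ENNReal.mul_iInf_of_ne hc0 hcT).symm
        _ = c * sInf S := by rw [sInf_eq_iInf']
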